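/- Let B > 0 and r₀ > 0, and for r > r₀ define σ(r) := (1/2)·ln( √(B/(2r₀⁴)) · r² · √(1 − r₀⁸/r⁸) ). Then σ is differentiable on (r₀, ∞) with σ'(r) = (r⁸ + r₀⁸)/( r·(r⁸ − r₀⁸) ), and it satisfies r²·σ'(r)² = 1 + B²·exp(−8·σ(r)) for all r > r₀. -/

import Mathlib

/-- The Gubser/Kehagias–Sfetsos radial coordinate change
`σ(r) = (1/2) ln(√(B/(2r₀⁴)) r² √(1 − r₀⁸/r⁸))`. -/
noncomputable def gksSigma (B r₀ r : ℝ) : ℝ :=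
  (1 / 2) * Real.log (Real.sqrt (B / (2 * r₀ ^ 4)) * r ^ 2 * Real.sqrt (1 - r₀ ^ 8 / r ^ 8))

/-- **GKS coordinate change.** For `r > r₀ > 0` and `B > 0`, `σ` is differentiable with
`σ'(r) = (r⁸ + r₀⁸)/(r (r⁸ − r₀⁸))` and satisfies `r² σ'(r)² = 1 + B² e^{−8σ(r)}`. -/
theorem gks_coordinate_change (B r₀ : ℝ) (hB : 0 < B) (hr₀ : 0 < r₀)
    (r : ℝ) (hr : r₀ < r) :
    HasDerivAt (gksSigma B r₀) ((r ^ 8 + r₀ ^ 8) / (r * (r ^ 8 - r₀ ^ 8))) r ∧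
    r ^ 2 * ((r ^ 8 + r₀ ^ 8) / (r * (r ^ 8 - r₀ ^ 8))) ^ 2 =
      1 + B ^ 2 * Real.exp (-8 * gksSigma B r₀ r) := by
  set C : ℝ := Real.sqrt (B / (2 * r₀ ^ 4)) with hCdef
  have hCpos : 0 < C := Real.sqrt_pos.2 (by positivity)
  have hC2 : C ^ 2 = B / (2 * r₀ ^ 4) := Real.sq_sqrt (by positivity)
  -- the simplified form of gksSigma on (r₀, ∞)
  have key : ∀ x : ℝ, r₀ < x →
      gksSigma B r₀ x =
        (1 / 2) * Real.log C + (1 / 4) * Real.log (x ^ 8 - r₀ ^ 8) - Real.log x := by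
    intro x hx
    have hx0 : 0 < x := hr₀.trans hx
    have hx8 : 0 < x ^ 8 - r₀ ^ 8 := by
      have := pow_lt_pow_left₀ hx hr₀.le (n := 8) (by norm_num)
      linarith
    have h1 : (1 : ℝ) - r₀ ^ 8 / x ^ 8 = (x ^ 8 - r₀ ^ 8) / x ^ 8 := by
      field_simp
    have hsx8 : Real.sqrt (x ^ 8) = x ^ 4 := by
      rw [show x ^ 8 = (x ^ 4) ^ 2 by ring, Real.sqrt_sq (by positivity)]
    rw [gksSigma, h1, Real.sqrt_div hx8.le, hsx8,
      show C * x ^ 2 * (Real.sqrt (x ^ 8 - r₀ ^ 8) / x ^ 4)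
        = C * (x ^ 2 * (Real.sqrt (x ^ 8 - r₀ ^ 8) / x ^ 4)) by ring,
      Real.log_mul hCpos.ne' (by positivity),
      Real.log_mul (by positivity) (by positivity),
      Real.log_div (by positivity) (by positivity),
      Real.log_sqrt hx8.le, Real.log_pow, Real.log_pow]
    push_cast
    ring
  have hr0 : 0 < r := hr₀.trans hr
  have hr8 : 0 < r ^ 8 - r₀ ^ 8 := by
    have := pow_lt_pow_left₀ hr hr₀.le (n := 8) (by norm_num)
    linarith
  constructor
  · -- derivative
    have hφ : HasDerivAt
        (fun x : ℝ => (1 / 2) * Real.log C + (1 / 4) * Real.log (x ^ 8 - r₀ ^ 8) - Real.log x)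
        ((1 / 4) * ((8 : ℕ) * r ^ 7 / (r ^ 8 - r₀ ^ 8)) - r⁻¹) r := by
      have h1 : HasDerivAt (fun x : ℝ => x ^ 8 - r₀ ^ 8) ((8 : ℕ) * r ^ 7) r := by
        simpa using (hasDerivAt_pow 8 r).sub_const (r₀ ^ 8)
      exact (((h1.log hr8.ne').const_mul (1 / 4)).const_add _).sub
        (Real.hasDerivAt_log hr0.ne')
    have heq : (1 / 4) * ((8 : ℕ) * r ^ 7 / (r ^ 8 - r₀ ^ 8)) - r⁻¹
        = (r ^ 8 + r₀ ^ 8) / (r * (r ^ 8 - r₀ ^ 8)) := by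
      push_cast
      field_simp
      ring
    rw [heq] at hφ
    refine hφ.congr_of_eventuallyEq ?_
    filter_upwards [Ioi_mem_nhds hr] with x hx using key x hx
  · -- the algebraic identity
    have hσ := key r hr
    have hexp : Real.exp (-8 * gksSigma B r₀ r)
        = r ^ 8 / (C ^ 4 * (r ^ 8 - r₀ ^ 8) ^ 2) := by
      have : -8 * gksSigma B r₀ r
          = Real.log (r ^ 8) - (Real.log (C ^ 4) + Real.log ((r ^ 8 - r₀ ^ 8) ^ 2)) := by
        rw [hσ, Real.log_pow, Real.log_pow, Real.log_pow]
        push_cast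
        try ring
      rw [this, Real.exp_sub, Real.exp_add, Real.exp_log (by positivity),
        Real.exp_log (by positivity), Real.exp_log (by positivity)]
      try ring
    rw [hexp, show C ^ 4 = (C ^ 2) ^ 2 by ring, hC2]
    have hr₀8 : (0:ℝ) < r₀ ^ 8 := by positivity
    field_simp
    ring
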